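/- A totally umbilical hypersurface M^m in an Einstein space N^{m+1} with non-positive scalar curvature is p-biharmonic if and only if it is minimal (its mean curvature function vanishes identically), assuming M is connected. -/

import Mathlib

/-- A connected totally umbilical hypersurface `M^m` in an Einstein space
`N^{m+1}` with non-positive scalar curvature `S` is `p`-biharmonic if and only if it is
minimal, i.e. its mean curvature function `f` vanishes identically.

For a totally umbilical hypersurface, `|A|² = m f²` and `A(grad f) = f • grad f`, so the
`p`-biharmonic system from Corollary 1 of the paper reads
`-Δf + f·(m f²) + m(p-2)f³ - S f/(m+1) = 0` and
`2 (f • grad f) + (p-2+m/2) • grad(f²) = 0`.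
The Laplacian `lap` and gradient `grad` operators are abstract, subject to the standard
properties they enjoy on a connected Riemannian manifold. -/
theorem stmt_3 {M : Type*} [TopologicalSpace M] [ConnectedSpace M]
    {E : Type*} [AddCommGroup E] [Module ℝ E]
    (m : ℕ) (hm : 1 ≤ m) (p S : ℝ) (hp : 2 ≤ p) (hS : S ≤ 0)
    (f : M → ℝ) (hf : Continuous f)
    (lap : (M → ℝ) → M → ℝ) (grad : (M → ℝ) → M → E)
    (hlapconst : ∀ c : ℝ, lap (fun _ => c) = fun _ => 0)
    (hgradconst : ∀ c : ℝ, grad (fun _ => c) = fun _ => 0)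
    (hgradsq : ∀ x, grad (fun y => (f y) ^ 2) x = (2 * f x) • grad f x)
    (hgradzero : ∀ u : M → ℝ, Continuous u → (∀ x, grad u x = 0) → ∀ x y, u x = u y) :
    ((∀ x, -(lap f x) + f x * ((m : ℝ) * (f x) ^ 2) + (m : ℝ) * (p - 2) * (f x) ^ 3
        - S * f x / ((m : ℝ) + 1) = 0) ∧
     (∀ x, (2 : ℝ) • (f x • grad f x)
        + (p - 2 + (m : ℝ) / 2) • grad (fun y => (f y) ^ 2) x = 0))
    ↔ ∀ x, f x = 0 := by
  constructor
  · rintro ⟨h1, h2⟩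
    -- From the second equation, f x • grad f x = 0 for all x
    have hcoef : (2 : ℝ) + 2 * (p - 2 + (m : ℝ) / 2) ≠ 0 := by
      have : (1 : ℝ) ≤ m := by exact_mod_cast hm
      nlinarith
    have hfg : ∀ x, f x • grad f x = 0 := by
      intro x
      have := h2 x
      rw [hgradsq x] at this
      have h' : ((2 : ℝ) + 2 * (p - 2 + (m : ℝ) / 2)) • (f x • grad f x) = 0 := by
        rw [← this]
        rw [smul_smul, smul_smul, smul_smul]
        rw [← add_smul]
        ring_nf
      exact (smul_eq_zero.mp h').resolve_left hcoef
    have hgsq : ∀ x, grad (fun y => (f y) ^ 2) x = 0 := by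
      intro x
      rw [hgradsq x, mul_smul]
      rw [hfg x, smul_zero]
    have hsqconst : ∀ x y : M, (f x) ^ 2 = (f y) ^ 2 :=
      hgradzero _ (hf.pow 2) hgsq
    by_contra hne
    push_neg at hne
    obtain ⟨x₀, hx₀⟩ := hne
    have hnz : ∀ x, f x ≠ 0 := by
      intro x hx
      have := hsqconst x₀ x
      rw [hx] at this
      simp at this
      exact hx₀ this
    -- clopen argument: f has constant sign
    have hclopen : IsClopen (f ⁻¹' Set.Ioi 0) := by
      constructor
      · have : f ⁻¹' Set.Ioi 0 = (f ⁻¹' Set.Iio 0)ᶜ := by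
          ext x
          simp only [Set.mem_preimage, Set.mem_Ioi, Set.mem_compl_iff, Set.mem_Iio, not_lt]
          constructor
          · intro h; linarith
          · intro h; exact lt_of_le_of_ne h (Ne.symm (hnz x))
        rw [this]
        exact (isOpen_Iio.preimage hf).isClosed_compl
      · exact isOpen_Ioi.preimage hf
    have hconst : ∀ x, f x = f x₀ := by
      rcases (isClopen_iff.mp hclopen) with he | hu
      · -- everywhere nonpositive, hence negative
        intro x
        have hxneg : f x < 0 := by
          have : x ∉ f ⁻¹' Set.Ioi 0 := by rw [he]; exact Set.notMem_empty x
          simp only [Set.mem_preimage, Set.mem_Ioi, not_lt] at this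
          exact lt_of_le_of_ne this (hnz x)
        have h0neg : f x₀ < 0 := by
          have : x₀ ∉ f ⁻¹' Set.Ioi 0 := by rw [he]; exact Set.notMem_empty x₀
          simp only [Set.mem_preimage, Set.mem_Ioi, not_lt] at this
          exact lt_of_le_of_ne this (hnz x₀)
        have := hsqconst x x₀
        nlinarith
      · intro x
        have hxpos : f x > 0 := by
          have : x ∈ f ⁻¹' Set.Ioi 0 := by rw [hu]; trivial
          simpa using this
        have h0pos : f x₀ > 0 := by
          have : x₀ ∈ f ⁻¹' Set.Ioi 0 := by rw [hu]; trivial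
          simpa using this
        have := hsqconst x x₀
        nlinarith
    have hfc : f = fun _ => f x₀ := funext hconst
    have hlap0 : lap f x₀ = 0 := by
      rw [hfc, hlapconst]
    have heq := h1 x₀
    rw [hlap0] at heq
    have hm' : (1 : ℝ) ≤ m := by exact_mod_cast hm
    have hm1 : (0 : ℝ) < (m : ℝ) + 1 := by linarith
    have hdiv : S * f x₀ / ((m : ℝ) + 1) = 0 → S * f x₀ = 0 := by
      intro h
      field_simp at h
      simpa using h
    -- multiply out
    have key : (f x₀) * ((m : ℝ) * (p - 1) * (f x₀) ^ 2 * ((m:ℝ)+1) - S) = 0 := by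
      have h2' : (-(0:ℝ) + f x₀ * ((m : ℝ) * (f x₀) ^ 2) + (m : ℝ) * (p - 2) * (f x₀) ^ 3
        - S * f x₀ / ((m : ℝ) + 1)) * ((m:ℝ)+1) = 0 := by rw [heq]; ring
      field_simp at h2'
      nlinarith [h2']
    rcases mul_eq_zero.mp key with h | h
    · exact hx₀ h
    · have hfx2 : 0 < (f x₀) ^ 2 := by positivity
      have hpos : 0 < (m : ℝ) * (p - 1) := by nlinarith
      nlinarith [mul_pos (mul_pos hpos hfx2) hm1]
  · intro hf0
    have hfz : f = fun _ => (0 : ℝ) := funext hf0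
    constructor
    · intro x
      rw [hfz, hlapconst]
      norm_num
    · intro x
      have : grad (fun y => (f y) ^ 2) x = 0 := by
        rw [hgradsq x, hf0 x]
        simp
      rw [this, hf0 x]
      simp
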